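/- Assume [E : F] = 2. Suppose x, y is an E-basis of M_1 such that every 2-step centraliser C_i (i ≥ 2) equals E·x or E·y, and both values occur. Let γ, δ ∈ E \ F with γ ≠ δ. Then the Lie F-subalgebra L of M generated by X = x + y and Y = γx + δy is thin and non-metabelian, and dim_F L_i = 2 for every i ≠ 2. -/

import Mathlib

open Submodule

/-- The `i`-th two-step centraliser `C_i = {a ∈ M_1 | ⁅a, u⁆ = 0 for all u ∈ M_i}`. -/
def twoStepCentraliser {E : Type*} [Field E] {M : Type*} [LieRing M] [LieAlgebra E M]
    (Mc : ℕ → Submodule E M) (i : ℕ) : Submodule E M where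
  carrier := {a : M | a ∈ Mc 1 ∧ ∀ u ∈ Mc i, ⁅a, u⁆ = 0}
  add_mem' := by
    rintro a b ⟨ha1, ha2⟩ ⟨hb1, hb2⟩
    exact ⟨add_mem ha1 hb1, fun u hu => by rw [add_lie, ha2 u hu, hb2 u hu, add_zero]⟩
  zero_mem' := ⟨zero_mem _, fun u _ => zero_lie u⟩
  smul_mem' := by
    rintro c a ⟨ha1, ha2⟩
    exact ⟨Submodule.smul_mem _ c ha1, fun u hu => by rw [smul_lie, ha2 u hu, smul_zero]⟩

/-- `Mc` is a grading of `M` as a graded Lie algebra of maximal class over `E`,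
generated in degree 1. -/
structure IsMaximalClass (E : Type*) [Field E] (M : Type*) [LieRing M] [LieAlgebra E M]
    (Mc : ℕ → Submodule E M) : Prop where
  zero_bot : Mc 0 = ⊥
  internal : DirectSum.IsInternal Mc
  lie_mem : ∀ i j : ℕ, ∀ x ∈ Mc i, ∀ y ∈ Mc j, ⁅x, y⁆ ∈ Mc (i + j)
  finrank_one : Module.finrank E ↥(Mc 1) = 2
  finrank_eq_one : ∀ i : ℕ, 2 ≤ i → Module.finrank E ↥(Mc i) = 1
  span_succ : ∀ i : ℕ, 1 ≤ i →
    Mc (i + 1) = Submodule.span E {z : M | ∃ v ∈ Mc i, ∃ a ∈ Mc 1, z = ⁅v, a⁆}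

/-- The homogeneous components of the Lie `F`-subalgebra generated by `X` and `Y` in
degree 1:  `L_1 = span_F {X, Y}` and `L_{i+1} = span_F {⁅v, a⁆ : v ∈ L_i, a ∈ L_1}`. -/
def Lcomp (F : Type*) [Field F] {M : Type*} [LieRing M] [Module F M]
    (X Y : M) : ℕ → Submodule F M
  | 0 => ⊥
  | 1 => Submodule.span F {X, Y}
  | (i + 2) => Submodule.span F
      {z : M | ∃ v ∈ Lcomp F X Y (i + 1), ∃ a ∈ Submodule.span F ({X, Y} : Set M), z = ⁅v, a⁆}

/-- `d_i = dim_F (C_i ∩ L_1)`. -/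
noncomputable def dSeq (E : Type*) [Field E] {M : Type*} [LieRing M] [LieAlgebra E M]
    (Mc : ℕ → Submodule E M) (F : Type*) [Field F] [Algebra F E] [LieAlgebra F M]
    [IsScalarTower F E M] (X Y : M) (i : ℕ) : ℕ :=
  Module.finrank F
    ↥(Submodule.restrictScalars F (twoStepCentraliser Mc i) ⊓ Lcomp F X Y 1)

/-- The covering property: `⁅u, L_1⁆ = L_{i+1}` for every `i ≥ 1` and nonzero `u ∈ L_i`. -/
def CoveringProperty (F : Type*) [Field F] {M : Type*} [LieRing M] [Module F M]
    (X Y : M) : Prop :=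
  ∀ i : ℕ, 1 ≤ i → ∀ u ∈ Lcomp F X Y i, u ≠ 0 →
    Submodule.span F {z : M | ∃ a ∈ Lcomp F X Y 1, z = ⁅u, a⁆} = Lcomp F X Y (i + 1)

section Helpers
open Module
variable {F E M : Type*} [Field F] [Field E] [Algebra F E]
  [AddCommGroup M] [Module E M] [Module F M] [IsScalarTower F E M]

lemma aux_one_dim_eq_span (p : Submodule E M) (hp : finrank E p = 1)
    {w : M} (hw : w ∈ p) (hw0 : w ≠ 0) : p = Submodule.span E {w} := by
  have : FiniteDimensional E p := Module.finite_of_finrank_pos (by omega)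
  refine (Submodule.eq_of_le_of_finrank_le ((Submodule.span_singleton_le_iff_mem _ _).2 hw) ?_).symm
  rw [hp, finrank_span_singleton hw0]

lemma aux_span_one_top {δ : E} (hδ : δ ∉ Set.range (algebraMap F E)) (hEF : finrank F E = 2) :
    Submodule.span F ({1, δ} : Set E) = ⊤ := by
  have : FiniteDimensional F E := Module.finite_of_finrank_pos (by omega)
  have hinj : Function.Injective (algebraMap F E) := RingHom.injective _
  have hli : LinearIndependent F ![(1:E), δ] := by
    rw [LinearIndependent.pair_iff]
    intro s t hst
    rw [Algebra.smul_def, Algebra.smul_def, mul_one] at hst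
    by_cases ht : t = 0
    · subst ht
      simp only [map_zero, zero_mul, add_zero] at hst
      exact ⟨hinj (by rw [hst, map_zero]), rfl⟩
    · exfalso
      apply hδ
      refine ⟨-s / t, ?_⟩
      have htE : algebraMap F E t ≠ 0 := fun h => ht (hinj (by rw [h, map_zero]))
      rw [map_div₀, map_neg, div_eq_iff htE]
      linear_combination -hst
  have hr : Set.range ![(1:E), δ] = {1, δ} := by
    rw [Set.pair_comm]
    simp [Matrix.range_cons, Matrix.range_empty]
  have := finrank_span_eq_card hli
  rw [hr] at this
  exact Submodule.eq_top_of_finrank_eq (by rw [this, hEF]; rfl)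

lemma aux_span_smul_pair {δ : E} (hδ : δ ∉ Set.range (algebraMap F E)) (hEF : finrank F E = 2)
    (z : M) :
    Submodule.span F {z, δ • z} = Submodule.restrictScalars F (Submodule.span E {z}) := by
  let f : E →ₗ[F] M := (LinearMap.toSpanSingleton E M z).restrictScalars F
  have h2 : Submodule.map f (Submodule.span F ({1, δ} : Set E)) = Submodule.span F {z, δ • z} := by
    rw [Submodule.map_span]
    congr 1
    simp [f, Set.image_insert_eq, LinearMap.toSpanSingleton_apply]
  ext u
  rw [Submodule.restrictScalars_mem, Submodule.mem_span_singleton, ← h2,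
    aux_span_one_top hδ hEF, Submodule.map_top, LinearMap.mem_range]
  simp [f, LinearMap.toSpanSingleton_apply]

lemma aux_restrict_finrank (p : Submodule E M) (hp : finrank E p = 1) (hEF : finrank F E = 2) :
    finrank F (Submodule.restrictScalars F p) = 2 := by
  have heq : finrank F (Submodule.restrictScalars F p) = finrank F p := rfl
  rw [heq, ← Module.finrank_mul_finrank F E p, hp, hEF]

lemma aux_not_mem_span {x y : M} (hxy : LinearIndependent E ![x, y]) :
    x ∉ Submodule.span E {y} := by
  intro h
  rw [LinearIndependent.pair_iff] at hxy
  obtain ⟨c, hc⟩ := Submodule.mem_span_singleton.mp h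
  have := (hxy 1 (-c) (by rw [one_smul, neg_smul, ← hc]; abel)).1
  simp at this

lemma aux_not_mem_span' {x y : M} (hxy : LinearIndependent E ![x, y]) :
    y ∉ Submodule.span E {x} := by
  intro h
  rw [LinearIndependent.pair_iff] at hxy
  obtain ⟨c, hc⟩ := Submodule.mem_span_singleton.mp h
  have := (hxy (-c) 1 (by rw [one_smul, neg_smul, ← hc]; abel)).2
  simp at this

end Helpers

section Helpers2
open Module
variable {F M : Type*} [Field F] [LieRing M] [LieAlgebra F M]

lemma Lcomp_one (X Y : M) : Lcomp F X Y 1 = Submodule.span F {X, Y} := rfl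

lemma Lcomp_succ_succ (X Y : M) (i : ℕ) :
    Lcomp F X Y (i + 2) = Submodule.span F
      {z : M | ∃ v ∈ Lcomp F X Y (i + 1), ∃ a ∈ Submodule.span F ({X, Y} : Set M), z = ⁅v, a⁆} :=
  rfl

lemma aux_finrank_span_pair {a b : M} (h : LinearIndependent F ![a, b]) :
    finrank F (Submodule.span F ({a, b} : Set M)) = 2 := by
  have hr : Set.range ![a, b] = {a, b} := by
    rw [Set.pair_comm]
    simp [Matrix.range_cons, Matrix.range_empty]
  have := finrank_span_eq_card h
  rw [hr] at this
  rw [this]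
  rfl

lemma aux_bracket_span (u X Y : M) :
    Submodule.span F {z : M | ∃ a ∈ Submodule.span F ({X, Y} : Set M), z = ⁅u, a⁆} =
    Submodule.span F {⁅u, X⁆, ⁅u, Y⁆} := by
  apply le_antisymm
  · rw [Submodule.span_le]
    rintro _ ⟨a, ha, rfl⟩
    obtain ⟨c, d, rfl⟩ := Submodule.mem_span_pair.mp ha
    have h : ⁅u, c • X + d • Y⁆ = c • ⁅u, X⁆ + d • ⁅u, Y⁆ := by
      simp [lie_add, lie_smul]
    rw [SetLike.mem_coe, h]
    exact Submodule.add_mem _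
      (Submodule.smul_mem _ _ (Submodule.subset_span (by simp)))
      (Submodule.smul_mem _ _ (Submodule.subset_span (by simp)))
  · apply Submodule.span_mono
    rintro z (rfl | rfl)
    · exact ⟨X, Submodule.subset_span (by simp), rfl⟩
    · exact ⟨Y, Submodule.subset_span (by simp), rfl⟩

lemma aux_bracket_span2 (w X Y : M) :
    Submodule.span F {z : M | ∃ v ∈ Submodule.span F ({w} : Set M),
      ∃ a ∈ Submodule.span F ({X, Y} : Set M), z = ⁅v, a⁆} =
    Submodule.span F {⁅w, X⁆, ⁅w, Y⁆} := by
  apply le_antisymm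
  · rw [Submodule.span_le]
    rintro _ ⟨v, hv, a, ha, rfl⟩
    obtain ⟨c, rfl⟩ := Submodule.mem_span_singleton.mp hv
    obtain ⟨c', d', rfl⟩ := Submodule.mem_span_pair.mp ha
    have h : ⁅c • w, c' • X + d' • Y⁆ = (c * c') • ⁅w, X⁆ + (c * d') • ⁅w, Y⁆ := by
      simp [lie_add, lie_smul, smul_lie, smul_smul, smul_add, mul_comm]
    rw [SetLike.mem_coe, h]
    exact Submodule.add_mem _
      (Submodule.smul_mem _ _ (Submodule.subset_span (by simp)))
      (Submodule.smul_mem _ _ (Submodule.subset_span (by simp)))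
  · apply Submodule.span_mono
    rintro z (rfl | rfl)
    · exact ⟨w, Submodule.subset_span rfl, X, Submodule.subset_span (by simp), rfl⟩
    · exact ⟨w, Submodule.subset_span rfl, Y, Submodule.subset_span (by simp), rfl⟩

lemma aux_lie_pair (a b c d : F) (X Y : M) :
    ⁅a • X + b • Y, c • X + d • Y⁆ = (a * d - b * c) • ⁅X, Y⁆ := by
  rw [lie_add, add_lie, add_lie]
  rw [show ⁅a • X, c • X⁆ = (0 : M) by simp [lie_smul, smul_lie],
      show ⁅b • Y, d • Y⁆ = (0 : M) by simp [lie_smul, smul_lie]]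
  rw [show ⁅b • Y, c • X⁆ = -((b * c) • ⁅X, Y⁆) by
    rw [smul_lie, lie_smul, smul_smul, ← smul_neg, lie_skew]]
  rw [show ⁅a • X, d • Y⁆ = (a * d) • ⁅X, Y⁆ by rw [smul_lie, lie_smul, smul_smul]]
  rw [sub_smul]
  abel

lemma aux_L2 (X Y : M) : Lcomp F X Y 2 = Submodule.span F {⁅X, Y⁆} := by
  rw [show (2:ℕ) = 0 + 2 from rfl, Lcomp_succ_succ, Lcomp_one]
  apply le_antisymm
  · rw [Submodule.span_le]
    rintro _ ⟨v, hv, a, ha, rfl⟩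
    obtain ⟨c, d, rfl⟩ := Submodule.mem_span_pair.mp hv
    obtain ⟨c', d', rfl⟩ := Submodule.mem_span_pair.mp ha
    rw [SetLike.mem_coe, aux_lie_pair]
    exact Submodule.smul_mem _ _ (Submodule.mem_span_singleton_self _)
  · rw [Submodule.span_le]
    rintro z rfl
    exact Submodule.subset_span ⟨X, Submodule.subset_span (by simp), Y,
      Submodule.subset_span (by simp), rfl⟩

lemma aux_span_smul_pair_nonzero {a b : F} {w : M} (hab : a ≠ 0 ∨ b ≠ 0) :
    Submodule.span F ({a • w, b • w} : Set M) = Submodule.span F {w} := by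
  apply le_antisymm
  · rw [Submodule.span_le]
    rintro z (rfl | rfl) <;>
      exact Submodule.smul_mem _ _ (Submodule.mem_span_singleton_self _)
  · rw [Submodule.span_singleton_le_iff_mem]
    rcases hab with h | h
    · exact Submodule.mem_span_pair.2 ⟨a⁻¹, 0, by simp [smul_smul, inv_mul_cancel₀ h]⟩
    · exact Submodule.mem_span_pair.2 ⟨0, b⁻¹, by simp [smul_smul, inv_mul_cancel₀ h]⟩

end Helpers2

section Main
open Module
variable {E : Type*} [Field E] {M : Type*} [LieRing M] [LieAlgebra E M]
  {Mc : ℕ → Submodule E M}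
  {F : Type*} [Field F] [Algebra F E] [LieAlgebra F M] [IsScalarTower F E M]

/-- A generic version of the computation of `M₂`. -/
lemma keyM2 (hM : IsMaximalClass E M Mc) {p q : M} (hp : p ∈ Mc 1) (hq : q ∈ Mc 1)
    (hspan' : Submodule.span E {p, q} = Mc 1) :
    Mc 2 = Submodule.span E {⁅p, q⁆} ∧ ⁅p, q⁆ ≠ 0 := by
  have hmem : ⁅p, q⁆ ∈ Mc 2 := hM.lie_mem 1 1 p hp q hq
  have hle : Mc 2 ≤ Submodule.span E {⁅p, q⁆} := by
    have h := hM.span_succ 1 le_rfl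
    rw [show (1:ℕ) + 1 = 2 from rfl] at h
    rw [h, Submodule.span_le]
    rintro _ ⟨v, hv, a, ha, rfl⟩
    rw [← hspan', Submodule.mem_span_pair] at hv ha
    obtain ⟨c, d, rfl⟩ := hv
    obtain ⟨c', d', rfl⟩ := ha
    rw [SetLike.mem_coe, aux_lie_pair]
    exact Submodule.smul_mem _ _ (Submodule.mem_span_singleton_self _)
  have heq : Mc 2 = Submodule.span E {⁅p, q⁆} :=
    le_antisymm hle ((Submodule.span_singleton_le_iff_mem _ _).2 hmem)
  refine ⟨heq, fun h0 => ?_⟩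
  have h1 := hM.finrank_eq_one 2 le_rfl
  rw [heq, h0, Submodule.span_zero_singleton, finrank_bot] at h1
  omega

lemma keyC (hM : IsMaximalClass E M Mc) {p q : M} (hp : p ∈ Mc 1) (hq : q ∈ Mc 1)
    (hspan' : Submodule.span E {p, q} = Mc 1)
    {i : ℕ} (hi : 2 ≤ i) {w : M} (hw : w ∈ Mc i) (hw0 : w ≠ 0)
    (hCi : twoStepCentraliser Mc i = Submodule.span E {p}) :
    ⁅w, p⁆ = 0 ∧ ⁅w, q⁆ ≠ 0 ∧ Mc (i + 1) = Submodule.span E {⁅w, q⁆} := by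
  have hpC : p ∈ twoStepCentraliser Mc i := hCi ▸ Submodule.mem_span_singleton_self p
  have hpw : ⁅w, p⁆ = 0 := by
    rw [← neg_eq_zero, lie_skew, hpC.2 w hw]
  have hMi : Mc i = Submodule.span E {w} := aux_one_dim_eq_span _ (hM.finrank_eq_one i hi) hw hw0
  have hwq_mem : ⁅w, q⁆ ∈ Mc (i + 1) := hM.lie_mem i 1 w hw q hq
  have hle : Mc (i + 1) ≤ Submodule.span E {⁅w, q⁆} := by
    rw [hM.span_succ i (by omega), Submodule.span_le]
    rintro _ ⟨v, hv, a, ha, rfl⟩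
    rw [hMi, Submodule.mem_span_singleton] at hv
    obtain ⟨ε, rfl⟩ := hv
    rw [← hspan', Submodule.mem_span_pair] at ha
    obtain ⟨α, β, rfl⟩ := ha
    have h : ⁅ε • w, α • p + β • q⁆ = (β * ε) • ⁅w, q⁆ := by
      rw [lie_add, lie_smul, lie_smul, smul_lie, smul_lie, hpw, smul_zero, smul_zero, zero_add,
        smul_smul]
    rw [SetLike.mem_coe, h]
    exact Submodule.smul_mem _ _ (Submodule.mem_span_singleton_self _)
  have heq : Mc (i + 1) = Submodule.span E {⁅w, q⁆} :=
    le_antisymm hle ((Submodule.span_singleton_le_iff_mem _ _).2 hwq_mem)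
  refine ⟨hpw, fun h0 => ?_, heq⟩
  have h1 := hM.finrank_eq_one (i + 1) (by omega)
  rw [heq, h0, Submodule.span_zero_singleton, finrank_bot] at h1
  omega

lemma keyD (hM : IsMaximalClass E M Mc) (hEF : Module.finrank F E = 2)
    {x y : M} (hx : x ∈ Mc 1) (hy : y ∈ Mc 1)
    (hspan : Submodule.span E {x, y} = Mc 1)
    {γ δ : E} (hγ : γ ∉ Set.range (algebraMap F E)) (hδ : δ ∉ Set.range (algebraMap F E))
    {i : ℕ} (hi : 2 ≤ i) {w : M} (hw : w ∈ Mc i) (hw0 : w ≠ 0)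
    (hCi : twoStepCentraliser Mc i = Submodule.span E {x} ∨
      twoStepCentraliser Mc i = Submodule.span E {y}) :
    Submodule.span F {⁅w, x + y⁆, ⁅w, γ • x + δ • y⁆} =
      Submodule.restrictScalars F (Mc (i + 1)) := by
  rcases hCi with h | h
  · obtain ⟨hwp, hwq, heq⟩ := keyC hM hx hy hspan hi hw hw0 h
    have e1 : ⁅w, x + y⁆ = ⁅w, y⁆ := by rw [lie_add, hwp, zero_add]
    have e2 : ⁅w, γ • x + δ • y⁆ = δ • ⁅w, y⁆ := by
      rw [lie_add, lie_smul, lie_smul, hwp, smul_zero, zero_add]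
    rw [e1, e2, aux_span_smul_pair hδ hEF, heq]
  · have hspan2 : Submodule.span E {y, x} = Mc 1 := by rw [Set.pair_comm]; exact hspan
    obtain ⟨hwp, hwq, heq⟩ := keyC hM hy hx hspan2 hi hw hw0 h
    have e1 : ⁅w, x + y⁆ = ⁅w, x⁆ := by rw [lie_add, hwp, add_zero]
    have e2 : ⁅w, γ • x + δ • y⁆ = γ • ⁅w, x⁆ := by
      rw [lie_add, lie_smul, lie_smul, hwp, smul_zero, add_zero]
    rw [e1, e2, aux_span_smul_pair hγ hEF, heq]

lemma keyW2 (hM : IsMaximalClass E M Mc) {x y : M} (hx : x ∈ Mc 1) (hy : y ∈ Mc 1)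
    (hspan : Submodule.span E {x, y} = Mc 1) {γ δ : E} (hγδ : γ ≠ δ) :
    ⁅x + y, γ • x + δ • y⁆ = (δ - γ) • ⁅x, y⁆ ∧ ⁅x + y, γ • x + δ • y⁆ ≠ 0 ∧
      ⁅x + y, γ • x + δ • y⁆ ∈ Mc 2 := by
  obtain ⟨hM2, hne⟩ := keyM2 hM hx hy hspan
  have he : ⁅x + y, γ • x + δ • y⁆ = (δ - γ) • ⁅x, y⁆ := by
    have h := aux_lie_pair (F := E) 1 1 γ δ x y
    rw [one_smul, one_smul, one_mul, one_mul] at h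
    exact h
  refine ⟨he, ?_, ?_⟩
  · rw [he]
    exact smul_ne_zero (sub_ne_zero.2 (Ne.symm hγδ)) hne
  · rw [he]
    exact Submodule.smul_mem _ _ (hM.lie_mem 1 1 x hx y hy)

lemma keyLle (hM : IsMaximalClass E M Mc) {X Y : M} (hX : X ∈ Mc 1) (hY : Y ∈ Mc 1) :
    ∀ j : ℕ, 1 ≤ j → Lcomp F X Y j ≤ Submodule.restrictScalars F (Mc j) := by
  have hpair : Submodule.span F {X, Y} ≤ Submodule.restrictScalars F (Mc 1) :=
    Submodule.span_le.2 (by rintro z (rfl | rfl); exacts [hX, hY])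
  intro j
  induction j using Nat.strong_induction_on with
  | _ j ih =>
    intro hj
    match j, hj with
    | 1, _ => exact hpair
    | (m + 2), _ =>
      rw [Lcomp_succ_succ, Submodule.span_le]
      rintro _ ⟨v, hv, a, ha, rfl⟩
      have hvM : v ∈ Mc (m + 1) := ih (m + 1) (by omega) (by omega) hv
      have haM : a ∈ Mc 1 := hpair ha
      exact hM.lie_mem (m + 1) 1 v hvM a haM

lemma keyL (hM : IsMaximalClass E M Mc) (hEF : Module.finrank F E = 2)
    {x y : M} (hx : x ∈ Mc 1) (hy : y ∈ Mc 1)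
    (hspan : Submodule.span E {x, y} = Mc 1)
    (hC : ∀ i : ℕ, 2 ≤ i → twoStepCentraliser Mc i = Submodule.span E {x} ∨
      twoStepCentraliser Mc i = Submodule.span E {y})
    {γ δ : E} (hγ : γ ∉ Set.range (algebraMap F E)) (hδ : δ ∉ Set.range (algebraMap F E))
    (hγδ : γ ≠ δ) :
    ∀ k : ℕ, 3 ≤ k → Lcomp F (x + y) (γ • x + δ • y) k = Submodule.restrictScalars F (Mc k) := by
  obtain ⟨hw2e, hw2ne, hw2m⟩ := keyW2 hM hx hy hspan hγδ
  have hX : x + y ∈ Mc 1 := add_mem hx hy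
  have hY : γ • x + δ • y ∈ Mc 1 :=
    add_mem (Submodule.smul_mem _ _ hx) (Submodule.smul_mem _ _ hy)
  intro k hk
  induction k, hk using Nat.le_induction with
  | base =>
    rw [show (3 : ℕ) = 1 + 2 from rfl, Lcomp_succ_succ, show (1 : ℕ) + 1 = 2 from rfl,
      aux_L2, aux_bracket_span2]
    exact keyD hM hEF hx hy hspan hγ hδ le_rfl hw2m hw2ne (hC 2 le_rfl)
  | succ k hk ih =>
    obtain ⟨m, rfl⟩ : ∃ m, k = m + 2 := ⟨k - 2, by omega⟩
    rw [show m + 2 + 1 = (m + 1) + 2 from rfl, Lcomp_succ_succ,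
      show m + 1 + 1 = m + 2 from rfl, ih]
    apply le_antisymm
    · rw [Submodule.span_le]
      rintro _ ⟨v, hv, a, ha, rfl⟩
      have hvM : v ∈ Mc (m + 2) := hv
      have haM : a ∈ Mc 1 :=
        (Submodule.span_le.2 (by rintro z (rfl | rfl); exacts [hX, hY]) : _ ≤
          Submodule.restrictScalars F (Mc 1)) ha
      exact hM.lie_mem (m + 2) 1 v hvM a haM
    · have hne : Mc (m + 2) ≠ ⊥ := fun h => by
        have h1 := hM.finrank_eq_one (m + 2) (by omega)
        rw [h, finrank_bot] at h1
        omega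
      obtain ⟨w, hw, hw0⟩ := (Submodule.ne_bot_iff _).mp hne
      have hd := keyD hM hEF hx hy hspan hγ hδ (by omega : 2 ≤ m + 2) hw hw0 (hC (m + 2) (by omega))
      rw [show m + 2 + 1 = m + 3 from rfl] at hd
      rw [← hd, Submodule.span_le]
      rintro z (rfl | rfl)
      · exact Submodule.subset_span ⟨w, hw, x + y, Submodule.subset_span (by simp), rfl⟩
      · exact Submodule.subset_span ⟨w, hw, γ • x + δ • y, Submodule.subset_span (by simp), rfl⟩

lemma keyLlieSpan {X Y : M} :
    ∀ j : ℕ, Lcomp F X Y j ≤ (LieSubalgebra.lieSpan F M {X, Y}).toSubmodule := by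
  have hpair : Submodule.span F {X, Y} ≤ (LieSubalgebra.lieSpan F M {X, Y}).toSubmodule :=
    Submodule.span_le.2 (by
      rintro z (rfl | rfl)
      · exact LieSubalgebra.subset_lieSpan (by simp)
      · exact LieSubalgebra.subset_lieSpan (by simp))
  intro j
  induction j using Nat.strong_induction_on with
  | _ j ih =>
    match j with
    | 0 => exact bot_le
    | 1 => exact hpair
    | (m + 2) =>
      rw [Lcomp_succ_succ, Submodule.span_le]
      rintro _ ⟨v, hv, a, ha, rfl⟩
      exact (LieSubalgebra.lieSpan F M {X, Y}).lie_mem (ih (m + 1) (by omega) hv) (hpair ha)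

/-- If `C_2 = span {p}` then `C_3 = span {p}`. -/
lemma keyC3 (hM : IsMaximalClass E M Mc) {p q : M} (hp : p ∈ Mc 1) (hq : q ∈ Mc 1)
    (hspan' : Submodule.span E {p, q} = Mc 1) (hpq : p ∉ Submodule.span E {q})
    (h2 : twoStepCentraliser Mc 2 = Submodule.span E {p})
    (h3 : twoStepCentraliser Mc 3 = Submodule.span E {p} ∨
      twoStepCentraliser Mc 3 = Submodule.span E {q}) :
    twoStepCentraliser Mc 3 = Submodule.span E {p} := by
  obtain ⟨hM2, hw0⟩ := keyM2 hM hp hq hspan'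
  have hwm : ⁅p, q⁆ ∈ Mc 2 := hM.lie_mem 1 1 p hp q hq
  obtain ⟨hwp, hwq, heq⟩ := keyC hM hp hq hspan' le_rfl hwm hw0 h2
  have hpC3 : p ∈ twoStepCentraliser Mc 3 := by
    refine ⟨hp, fun u hu => ?_⟩
    rw [show (3:ℕ) = 2 + 1 from rfl, heq, Submodule.mem_span_singleton] at hu
    obtain ⟨ε, rfl⟩ := hu
    rw [lie_smul]
    have : ⁅p, ⁅⁅p, q⁆, q⁆⁆ = 0 := by
      rw [leibniz_lie p ⁅p, q⁆ q]
      rw [show ⁅p, ⁅p, q⁆⁆ = (0 : M) by rw [← neg_eq_zero, lie_skew, hwp], zero_lie, zero_add,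
        lie_self]
    rw [this, smul_zero]
  rcases h3 with h | h
  · exact h
  · exact absurd (h ▸ hpC3) hpq

/-- If the two-step centralisers take both values, some consecutive pair with index `≥ 3`
differs. -/
lemma keyExistsK (hM : IsMaximalClass E M Mc) {x y : M} (hx : x ∈ Mc 1) (hy : y ∈ Mc 1)
    (hxy : LinearIndependent E ![x, y]) (hspan : Submodule.span E {x, y} = Mc 1)
    (hC : ∀ i : ℕ, 2 ≤ i → twoStepCentraliser Mc i = Submodule.span E {x} ∨
      twoStepCentraliser Mc i = Submodule.span E {y})
    (hCx : ∃ i : ℕ, 2 ≤ i ∧ twoStepCentraliser Mc i = Submodule.span E {x})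
    (hCy : ∃ j : ℕ, 2 ≤ j ∧ twoStepCentraliser Mc j = Submodule.span E {y}) :
    ∃ k : ℕ, 3 ≤ k ∧ twoStepCentraliser Mc k ≠ twoStepCentraliser Mc (k + 1) := by
  by_contra hcon
  push_neg at hcon
  have hconst : ∀ k : ℕ, 3 ≤ k → twoStepCentraliser Mc k = twoStepCentraliser Mc 3 := by
    intro k hk
    induction k, hk using Nat.le_induction with
    | base => rfl
    | succ k hk ih => rw [← hcon k hk, ih]
  have h23 : twoStepCentraliser Mc 2 = twoStepCentraliser Mc 3 := by
    rcases hC 2 le_rfl with h | h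
    · rw [h, keyC3 hM hx hy hspan (aux_not_mem_span hxy) h (hC 3 (by omega))]
    · have hspan2 : Submodule.span E {y, x} = Mc 1 := by rw [Set.pair_comm]; exact hspan
      rw [h, keyC3 hM hy hx hspan2 (aux_not_mem_span' hxy) h ((hC 3 (by omega)).symm)]
  have hall : ∀ i : ℕ, 2 ≤ i → twoStepCentraliser Mc i = twoStepCentraliser Mc 3 := by
    intro i hi
    rcases eq_or_lt_of_le hi with h | h
    · rw [← h]
      exact h23
    · exact hconst i (by omega)
  obtain ⟨i, hi, hCxi⟩ := hCx
  obtain ⟨j, hj, hCyj⟩ := hCy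
  have : Submodule.span E {x} = Submodule.span E {y} := by
    rw [← hCxi, ← hCyj, hall i hi, hall j hj]
  exact aux_not_mem_span hxy (this ▸ Submodule.mem_span_singleton_self x)

lemma keyNM (hM : IsMaximalClass E M Mc) {p q : M} (hp : p ∈ Mc 1) (hq : q ∈ Mc 1)
    (hspan' : Submodule.span E {p, q} = Mc 1) (hpq : p ∉ Submodule.span E {q})
    {k : ℕ} (hk : 2 ≤ k) {z : M} (hz : z ∈ Mc k) (hz0 : z ≠ 0)
    (hCk : twoStepCentraliser Mc k = Submodule.span E {p})
    (hCk1 : twoStepCentraliser Mc (k + 1) = Submodule.span E {q}) :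
    ⁅⁅p, q⁆, z⁆ ≠ 0 := by
  obtain ⟨hzp, hzq, heq⟩ := keyC hM hp hq hspan' hk hz hz0 hCk
  have hpz : ⁅p, z⁆ = 0 := by rw [← lie_skew, hzp, neg_zero]
  rw [lie_lie, hpz, lie_zero, sub_zero]
  intro h0
  have hpk1 : p ∈ twoStepCentraliser Mc (k + 1) := by
    refine ⟨hp, fun u hu => ?_⟩
    rw [heq, Submodule.mem_span_singleton] at hu
    obtain ⟨ε, rfl⟩ := hu
    rw [lie_smul]
    have hzq' : ⁅z, q⁆ = -⁅q, z⁆ := by rw [← lie_skew q z, neg_neg]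
    rw [hzq', lie_neg, h0, neg_zero, smul_zero]
  rw [hCk1] at hpk1
  exact hpq hpk1

end Main


/-- if `[E : F] = 2`, `x, y` is an `E`-basis of `M_1` such that every
2-step centraliser is `E·x` or `E·y` and both occur, and `γ, δ ∈ E \ F` with `γ ≠ δ`,
then the Lie `F`-subalgebra generated by `x + y` and `γx + δy` is thin, non-metabelian,
and all its homogeneous components of degree `≠ 2` have dimension 2 over `F`. -/
theorem stmt_9 (E : Type*) [Field E] (M : Type*) [LieRing M] [LieAlgebra E M]
    (Mc : ℕ → Submodule E M) (hM : IsMaximalClass E M Mc)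
    (F : Type*) [Field F] [Algebra F E] [LieAlgebra F M] [IsScalarTower F E M]
    (hEF : Module.finrank F E = 2)
    (x y : M) (hx : x ∈ Mc 1) (hy : y ∈ Mc 1) (hxy : LinearIndependent E ![x, y])
    (hspan : Submodule.span E {x, y} = Mc 1)
    (hC : ∀ i : ℕ, 2 ≤ i →
      twoStepCentraliser Mc i = Submodule.span E {x} ∨
      twoStepCentraliser Mc i = Submodule.span E {y})
    (hCx : ∃ i : ℕ, 2 ≤ i ∧ twoStepCentraliser Mc i = Submodule.span E {x})
    (hCy : ∃ j : ℕ, 2 ≤ j ∧ twoStepCentraliser Mc j = Submodule.span E {y})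
    (γ δ : E) (hγ : γ ∉ Set.range (algebraMap F E)) (hδ : δ ∉ Set.range (algebraMap F E))
    (hγδ : γ ≠ δ) :
    CoveringProperty F (x + y) (γ • x + δ • y) ∧
    ¬ (∀ i : ℕ, 2 ≤ i → Module.finrank F ↥(Lcomp F (x + y) (γ • x + δ • y) i) = 1) ∧
    ¬ (∀ a b c d : M,
        a ∈ LieSubalgebra.lieSpan F M {x + y, γ • x + δ • y} →
        b ∈ LieSubalgebra.lieSpan F M {x + y, γ • x + δ • y} →
        c ∈ LieSubalgebra.lieSpan F M {x + y, γ • x + δ • y} →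
        d ∈ LieSubalgebra.lieSpan F M {x + y, γ • x + δ • y} →
        ⁅⁅a, b⁆, ⁅c, d⁆⁆ = 0) ∧
    (∀ i : ℕ, 1 ≤ i → i ≠ 2 →
      Module.finrank F ↥(Lcomp F (x + y) (γ • x + δ • y) i) = 2) := by
  have hinj : Function.Injective (algebraMap F E) := RingHom.injective _
  obtain ⟨hw2e, hw2ne, hw2m⟩ := keyW2 hM hx hy hspan hγδ
  have hX : x + y ∈ Mc 1 := add_mem hx hy
  have hY : γ • x + δ • y ∈ Mc 1 :=
    add_mem (Submodule.smul_mem _ _ hx) (Submodule.smul_mem _ _ hy)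
  have hkeyL := keyL hM hEF hx hy hspan hC hγ hδ hγδ
  have hsk : ⁅γ • x + δ • y, x + y⁆ = -⁅x + y, γ • x + δ • y⁆ := by
    rw [← lie_skew (x + y) (γ • x + δ • y), neg_neg]
  have hLI : LinearIndependent F ![x + y, γ • x + δ • y] := by
    rw [LinearIndependent.pair_iff]
    intro s t hst
    rw [← algebraMap_smul E s (x + y), ← algebraMap_smul E t (γ • x + δ • y)] at hst
    have hst' : (algebraMap F E s + algebraMap F E t * γ) • x
        + (algebraMap F E s + algebraMap F E t * δ) • y = 0 := by
      calc (algebraMap F E s + algebraMap F E t * γ) • x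
            + (algebraMap F E s + algebraMap F E t * δ) • y
          = algebraMap F E s • (x + y) + algebraMap F E t • (γ • x + δ • y) := by
            rw [add_smul, add_smul, mul_smul, mul_smul, smul_add, smul_add]
            abel
        _ = 0 := hst
    rw [LinearIndependent.pair_iff] at hxy
    obtain ⟨h1, h2⟩ := hxy _ _ hst'
    have ht : algebraMap F E t = 0 := by
      have h3 : algebraMap F E t * (γ - δ) = 0 := by linear_combination h1 - h2
      rcases mul_eq_zero.mp h3 with h | h
      · exact h
      · exact absurd (sub_eq_zero.mp h) hγδ
    have hs : algebraMap F E s = 0 := by linear_combination h1 - γ * ht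
    exact ⟨hinj (by rw [hs, map_zero]), hinj (by rw [ht, map_zero])⟩
  refine ⟨?_, ?_, ?_, ?_⟩
  · -- Covering property
    intro i hi u hu hu0
    rw [Lcomp_one, aux_bracket_span]
    rcases i with _ | _ | _ | m
    · omega
    · -- i = 1
      rw [Lcomp_one] at hu
      obtain ⟨a, b, rfl⟩ := Submodule.mem_span_pair.mp hu
      have hab : -b ≠ 0 ∨ a ≠ 0 := by
        by_contra hcon
        push_neg at hcon
        obtain ⟨hb, ha⟩ := hcon
        rw [neg_eq_zero] at hb
        exact hu0 (by rw [ha, hb, zero_smul, zero_smul, add_zero])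
      have e1 : ⁅a • (x + y) + b • (γ • x + δ • y), x + y⁆
          = (-b) • ⁅x + y, γ • x + δ • y⁆ := by
        rw [add_lie, smul_lie, lie_self, smul_zero, zero_add, smul_lie, hsk, smul_neg, ← neg_smul]
      have e2 : ⁅a • (x + y) + b • (γ • x + δ • y), γ • x + δ • y⁆
          = a • ⁅x + y, γ • x + δ • y⁆ := by
        rw [add_lie, smul_lie, smul_lie, lie_self, smul_zero, add_zero]
      rw [e1, e2, aux_span_smul_pair_nonzero hab]
      exact (aux_L2 _ _).symm
    · -- i = 2
      rw [aux_L2] at hu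
      obtain ⟨c, rfl⟩ := Submodule.mem_span_singleton.mp hu
      have humem : c • ⁅x + y, γ • x + δ • y⁆ ∈ Mc 2 :=
        (Submodule.restrictScalars F (Mc 2)).smul_mem c hw2m
      have hd := keyD hM hEF hx hy hspan hγ hδ le_rfl humem hu0 (hC 2 le_rfl)
      rw [hd]
      exact (hkeyL 3 le_rfl).symm
    · -- i = m + 3
      have hu' : u ∈ Mc (m + 3) := by
        rw [hkeyL (m + 3) (by omega)] at hu
        exact hu
      have hd := keyD hM hEF hx hy hspan hγ hδ (by omega : 2 ≤ m + 3) hu' hu0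
        (hC (m + 3) (by omega))
      rw [hd]
      exact (hkeyL (m + 4) (by omega)).symm
  · -- not maximal class over F
    intro hcon
    have h3 := hcon 3 (by omega)
    rw [hkeyL 3 le_rfl,
      aux_restrict_finrank (Mc 3) (hM.finrank_eq_one 3 (by omega)) hEF] at h3
    omega
  · -- non-metabelian
    intro hcon
    obtain ⟨k, hk3, hkne⟩ := keyExistsK hM hx hy hxy hspan hC hCx hCy
    obtain ⟨m, rfl⟩ : ∃ m, k = m + 2 := ⟨k - 2, by omega⟩
    have hLk := hkeyL (m + 2) (by omega)
    have hLkne : Lcomp F (x + y) (γ • x + δ • y) (m + 2) ≠ ⊥ := by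
      intro h
      have h2 := aux_restrict_finrank (F := F) (Mc (m + 2))
        (hM.finrank_eq_one (m + 2) (by omega)) hEF
      rw [← hLk, h, finrank_bot] at h2
      omega
    have hgen : ∃ v ∈ Lcomp F (x + y) (γ • x + δ • y) (m + 1),
        ∃ a ∈ Submodule.span F ({x + y, γ • x + δ • y} : Set M), ⁅v, a⁆ ≠ 0 := by
      by_contra hcon2
      push_neg at hcon2
      apply hLkne
      rw [Lcomp_succ_succ, Submodule.span_eq_bot]
      rintro _ ⟨v, hv, a, ha, rfl⟩
      exact hcon2 v hv a ha
    obtain ⟨v, hv, a, ha, hza⟩ := hgen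
    have hzM : ⁅v, a⁆ ∈ Mc (m + 2) := by
      have hvM : v ∈ Mc (m + 1) := keyLle (F := F) hM hX hY (m + 1) (by omega) hv
      have haM : a ∈ Mc 1 :=
        (Submodule.span_le.2 (by rintro z (rfl | rfl); exacts [hX, hY]) : _ ≤
          Submodule.restrictScalars F (Mc 1)) ha
      exact hM.lie_mem (m + 1) 1 v hvM a haM
    have hvL : v ∈ LieSubalgebra.lieSpan F M {x + y, γ • x + δ • y} :=
      keyLlieSpan (F := F) (m + 1) hv
    have haL : a ∈ LieSubalgebra.lieSpan F M {x + y, γ • x + δ • y} :=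
      keyLlieSpan (F := F) 1 ha
    have h0 := hcon (x + y) (γ • x + δ • y) v a
      (LieSubalgebra.subset_lieSpan (by simp)) (LieSubalgebra.subset_lieSpan (by simp)) hvL haL
    have hne : ⁅⁅x + y, γ • x + δ • y⁆, ⁅v, a⁆⁆ ≠ 0 := by
      rw [hw2e, smul_lie]
      apply smul_ne_zero (sub_ne_zero.2 (Ne.symm hγδ))
      rcases hC (m + 2) (by omega) with h | h
      · have h' : twoStepCentraliser Mc (m + 3) = Submodule.span E {y} := by
          rcases hC (m + 3) (by omega) with h'' | h''
          · exact absurd (h.trans h''.symm) hkne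
          · exact h''
        exact keyNM hM hx hy hspan (aux_not_mem_span hxy) (by omega) hzM hza h h'
      · have h' : twoStepCentraliser Mc (m + 3) = Submodule.span E {x} := by
          rcases hC (m + 3) (by omega) with h'' | h''
          · exact h''
          · exact absurd (h.trans h''.symm) hkne
        have hyx : Submodule.span E {y, x} = Mc 1 := by rw [Set.pair_comm]; exact hspan
        have := keyNM hM hy hx hyx (aux_not_mem_span' hxy) (by omega) hzM hza h h'
        intro h0'
        apply this
        rw [show ⁅y, x⁆ = -⁅x, y⁆ from by rw [← lie_skew x y, neg_neg], neg_lie, h0', neg_zero]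
    exact hne h0
  · -- dimensions
    intro i hi hne2
    rcases i with _ | _ | _ | m
    · omega
    · rw [Lcomp_one]
      exact aux_finrank_span_pair hLI
    · exact absurd rfl hne2
    · rw [hkeyL (m + 3) (by omega)]
      exact aux_restrict_finrank _ (hM.finrank_eq_one (m + 3) (by omega)) hEF
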